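/- Every connected {H₁, P₅}-free graph on at least 2 vertices has edge-connectivity equal to its minimum degree. -/

import Mathlib

set_option maxRecDepth 8000
set_option maxHeartbeats 1000000

open SimpleGraph

/-- The edge-connectivity of `G`: the minimum number of edges whose deletion disconnects `G`. -/
noncomputable def edgeConn {V : Type*} [Fintype V] (G : SimpleGraph V) : ℕ :=
  sInf {k | ∃ F : Finset (Sym2 V), ↑F ⊆ G.edgeSet ∧ F.card = k ∧ ¬ (G.deleteEdges ↑F).Connected}

/-- The minimum degree of `G`. -/
noncomputable def minDeg {V : Type*} [Fintype V] (G : SimpleGraph V) : ℕ :=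
  sInf {d | ∃ v : V, d = (G.neighborSet v).ncard}

/-- `H₁`: the path `0-1-2-3-4-5` together with the chords `0-2` and `3-5`
(two triangles joined by an edge). -/
def H1 : SimpleGraph (Fin 6) :=
  SimpleGraph.fromEdgeSet {s(0,1), s(1,2), s(2,3), s(3,4), s(4,5), s(0,2), s(3,5)}

section Helpers

variable {V : Type*}

lemma embed_P5 (G : SimpleGraph V) (v0 v1 v2 v3 v4 : V)
    (e01 : G.Adj v0 v1) (e12 : G.Adj v1 v2) (e23 : G.Adj v2 v3) (e34 : G.Adj v3 v4)
    (n02 : ¬ G.Adj v0 v2) (n03 : ¬ G.Adj v0 v3) (n04 : ¬ G.Adj v0 v4)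
    (n13 : ¬ G.Adj v1 v3) (n14 : ¬ G.Adj v1 v4) (n24 : ¬ G.Adj v2 v4)
    (d02 : v0 ≠ v2) (d03 : v0 ≠ v3) (d04 : v0 ≠ v4) (d13 : v1 ≠ v3) (d14 : v1 ≠ v4)
    (d24 : v2 ≠ v4) : Nonempty (pathGraph 5 ↪g G) := by
  have h01 := e01.ne; have h12 := e12.ne; have h23 := e23.ne; have h34 := e34.ne
  have n20 : ¬ G.Adj v2 v0 := fun h => n02 h.symm
  have n30 : ¬ G.Adj v3 v0 := fun h => n03 h.symm
  have n40 : ¬ G.Adj v4 v0 := fun h => n04 h.symm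
  have n31 : ¬ G.Adj v3 v1 := fun h => n13 h.symm
  have n41 : ¬ G.Adj v4 v1 := fun h => n14 h.symm
  have n42 : ¬ G.Adj v4 v2 := fun h => n24 h.symm
  refine ⟨⟨⟨![v0,v1,v2,v3,v4], ?_⟩, ?_⟩⟩
  · intro i j h
    fin_cases i <;> fin_cases j <;> simp_all
  · intro i j
    fin_cases i <;> fin_cases j <;>
      simp_all [Function.Embedding.coeFn_mk, Matrix.cons_val, pathGraph_adj, e01.symm, e12.symm, e23.symm, e34.symm] <;> (simp only [Function.Embedding.coeFn_mk, DFunLike.coe] at * ; simp_all [e01.symm, e12.symm, e23.symm, e34.symm])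

lemma embed_H1 (G : SimpleGraph V) (v0 v1 v2 v3 v4 v5 : V)
    (e01 : G.Adj v0 v1) (e12 : G.Adj v1 v2) (e23 : G.Adj v2 v3) (e34 : G.Adj v3 v4)
    (e45 : G.Adj v4 v5) (e02 : G.Adj v0 v2) (e35 : G.Adj v3 v5)
    (n03 : ¬ G.Adj v0 v3) (n04 : ¬ G.Adj v0 v4) (n05 : ¬ G.Adj v0 v5)
    (n13 : ¬ G.Adj v1 v3) (n14 : ¬ G.Adj v1 v4) (n15 : ¬ G.Adj v1 v5)
    (n24 : ¬ G.Adj v2 v4) (n25 : ¬ G.Adj v2 v5)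
    (d03 : v0 ≠ v3) (d04 : v0 ≠ v4) (d05 : v0 ≠ v5) (d13 : v1 ≠ v3) (d14 : v1 ≠ v4)
    (d15 : v1 ≠ v5) (d24 : v2 ≠ v4) (d25 : v2 ≠ v5) : Nonempty (H1 ↪g G) := by
  have h01 := e01.ne; have h12 := e12.ne; have h23 := e23.ne; have h34 := e34.ne
  have h45 := e45.ne; have h02 := e02.ne; have h35 := e35.ne
  have h01' := h01.symm; have h12' := h12.symm; have h23' := h23.symm
  have h34' := h34.symm; have h45' := h45.symm; have h02' := h02.symm; have h35' := h35.symm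
  have d03' := d03.symm; have d04' := d04.symm; have d05' := d05.symm; have d13' := d13.symm
  have d14' := d14.symm; have d15' := d15.symm; have d24' := d24.symm; have d25' := d25.symm
  have n30 : ¬ G.Adj v3 v0 := fun h => n03 h.symm
  have n40 : ¬ G.Adj v4 v0 := fun h => n04 h.symm
  have n50 : ¬ G.Adj v5 v0 := fun h => n05 h.symm
  have n31 : ¬ G.Adj v3 v1 := fun h => n13 h.symm
  have n41 : ¬ G.Adj v4 v1 := fun h => n14 h.symm
  have n51 : ¬ G.Adj v5 v1 := fun h => n15 h.symm
  have n42 : ¬ G.Adj v4 v2 := fun h => n24 h.symm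
  have n52 : ¬ G.Adj v5 v2 := fun h => n25 h.symm
  have self : ∀ z, ¬ G.Adj z z := fun z => G.irrefl
  have hv5 : ![v0,v1,v2,v3,v4,v5] (5 : Fin 6) = v5 := rfl
  refine ⟨⟨⟨![v0,v1,v2,v3,v4,v5], ?_⟩, ?_⟩⟩
  · intro i j h
    fin_cases i <;> fin_cases j <;> (try rfl) <;>
      (simp only [Matrix.cons_val', Matrix.cons_val_zero, Matrix.cons_val_one,
        Matrix.head_cons, Matrix.cons_val_fin_one, Matrix.cons_val_succ] at h) <;> tauto
  · intro i j
    fin_cases i <;> fin_cases j <;>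
      simp [Function.Embedding.coeFn_mk, Matrix.cons_val, H1, e01, e12, e23, e34, e45, e02, e35, e01.symm, e12.symm, e23.symm, e34.symm,
        e45.symm, e02.symm, e35.symm, n03, n04, n05, n13, n14, n15, n24, n25,
        n30, n40, n50, n31, n41, n51, n42, n52, self, hv5] <;>
        (simp only [DFunLike.coe]; simp [e01, e12, e23, e34, e45, e02, e35, e01.symm, e12.symm,
          e23.symm, e34.symm, e45.symm, e02.symm, e35.symm, n03, n04, n05, n13, n14, n15, n24,
          n25, n30, n40, n50, n31, n41, n51, n42, n52, self])

lemma dist_getVert_le {G : SimpleGraph V} (hG : G.Connected) {a b : V}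
    (w : G.Walk a b) (i : ℕ) : G.dist a (w.getVert i) ≤ i := by
  induction i with
  | zero => simp [w.getVert_zero]
  | succ i ih =>
    by_cases h : i < w.length
    · have hadj := w.adj_getVert_succ h
      have h1 : G.dist (w.getVert i) (w.getVert (i+1)) ≤ 1 := by
        have := G.dist_le (Walk.cons hadj Walk.nil)
        simpa using this
      calc G.dist a (w.getVert (i+1))
          ≤ G.dist a (w.getVert i) + G.dist (w.getVert i) (w.getVert (i+1)) :=
            hG.dist_triangle
        _ ≤ i + 1 := by omega
    · have h1 : w.getVert (i+1) = w.getVert i := by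
        rw [w.getVert_of_length_le (by omega), w.getVert_of_length_le (by omega)]
      rw [h1]; exact le_trans ih (by omega)

lemma dist_getVert_le' {G : SimpleGraph V} (hG : G.Connected) {a b : V}
    (w : G.Walk a b) (i : ℕ) (hi : i ≤ w.length) :
    G.dist (w.getVert i) b ≤ w.length - i := by
  have := dist_getVert_le hG w.reverse (w.length - i)
  rw [w.getVert_reverse] at this
  have h2 : w.length - (w.length - i) = i := by omega
  rw [h2] at this
  rwa [G.dist_comm]

lemma exists_interior [Fintype V] (G : SimpleGraph V) (δ : ℕ)
    (hdeg : ∀ v : V, δ ≤ (G.neighborSet v).ncard) (A : Set V) (hA : A.Nonempty)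
    (hCn : {pq : V × V | pq.1 ∈ A ∧ pq.2 ∉ A ∧ G.Adj pq.1 pq.2}.ncard < δ) :
    ∃ a ∈ A, ∀ q, G.Adj a q → q ∈ A := by
  classical
  have hC : (Finset.univ.filter fun pq : V × V =>
      pq.1 ∈ A ∧ pq.2 ∉ A ∧ G.Adj pq.1 pq.2).card < δ := by
    have : {pq : V × V | pq.1 ∈ A ∧ pq.2 ∉ A ∧ G.Adj pq.1 pq.2}
        = ↑(Finset.univ.filter fun pq : V × V => pq.1 ∈ A ∧ pq.2 ∉ A ∧ G.Adj pq.1 pq.2) := by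
      ext pq; simp
    rwa [this, Set.ncard_coe_finset] at hCn
  have hdeg : ∀ v : V, δ ≤ (Finset.univ.filter (G.Adj v ·)).card := by
    intro v
    have : G.neighborSet v = ↑(Finset.univ.filter (G.Adj v ·)) := by ext q; simp
    have h := hdeg v
    rwa [this, Set.ncard_coe_finset] at h
  by_contra hcon
  push_neg at hcon
  set C : Finset (V × V) := Finset.univ.filter fun pq : V × V =>
      pq.1 ∈ A ∧ pq.2 ∉ A ∧ G.Adj pq.1 pq.2 with hCdef
  set A' : Finset V := Finset.univ.filter (· ∈ A) with hA'def
  set c : V → ℕ := fun z => (Finset.univ.filter fun q => G.Adj z q ∧ q ∉ A).card with hcdef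
  have hfib : ∀ z ∈ A', (C.filter fun pq => pq.1 = z).card = c z := by
    intro z hz
    have himg : C.filter (fun pq => pq.1 = z)
        = (Finset.univ.filter fun q => G.Adj z q ∧ q ∉ A).image (fun q => (z, q)) := by
      ext ⟨p, q⟩
      simp only [hCdef, Finset.mem_filter, Finset.mem_univ, true_and, Finset.mem_image]
      constructor
      · rintro ⟨⟨h1, h2, h3⟩, rfl⟩; exact ⟨q, ⟨h3, h2⟩, rfl⟩
      · rintro ⟨q', ⟨h3, h2⟩, heq⟩
        obtain ⟨rfl, rfl⟩ := Prod.mk.injEq .. ▸ heq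
        have hzA : z ∈ A := by simpa [hA'def] using hz
        exact ⟨⟨hzA, h2, h3⟩, rfl⟩
    rw [himg, Finset.card_image_of_injective _ (fun x y h => by simpa using h)]
  have hsum : C.card = ∑ z ∈ A', c z := by
    rw [Finset.card_eq_sum_card_fiberwise (f := Prod.fst) (t := A')]
    · exact Finset.sum_congr rfl hfib
    · intro pq hpq
      simp only [hCdef, Finset.mem_coe, Finset.mem_filter, Finset.mem_univ, true_and] at hpq
      simp [hA'def, hpq.1]
  have hone : ∀ z ∈ A', 1 ≤ c z := by
    intro z hz
    have hzA : z ∈ A := by simpa [hA'def] using hz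
    obtain ⟨q, hq1, hq2⟩ := hcon z hzA
    have : q ∈ Finset.univ.filter fun q => G.Adj z q ∧ q ∉ A := by simp [hq1, hq2]
    exact Finset.card_pos.mpr ⟨q, this⟩
  have hdegz : ∀ z ∈ A', δ + 1 ≤ A'.card + c z := by
    intro z hz
    set N : Finset V := Finset.univ.filter (G.Adj z ·) with hNdef
    have hsplit : (N.filter (· ∈ A)).card + (N.filter (· ∉ A)).card = N.card :=
      Finset.card_filter_add_card_filter_not _
    have hsub : N.filter (· ∈ A) ⊆ A'.erase z := by
      intro q hq
      simp only [hNdef, Finset.mem_filter, Finset.mem_univ, true_and] at hq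
      exact Finset.mem_erase.mpr ⟨fun h => G.irrefl (h ▸ hq.1), by simp [hA'def, hq.2]⟩
    have h1 : (N.filter (· ∈ A)).card ≤ A'.card - 1 := by
      have := Finset.card_le_card hsub
      rwa [Finset.card_erase_of_mem hz] at this
    have h2 : (N.filter (· ∉ A)).card = c z := by
      rw [hcdef, hNdef]; rw [Finset.filter_filter]
    have h3 : δ ≤ N.card := hdeg z
    have h4 : 1 ≤ A'.card := Finset.card_pos.mpr ⟨z, hz⟩
    omega
  have hm1 : 1 ≤ A'.card := by
    obtain ⟨a0, ha0⟩ := hA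
    exact Finset.card_pos.mpr ⟨a0, by simp [hA'def, ha0]⟩
  have hmC : A'.card ≤ C.card := by
    rw [hsum]
    calc A'.card = ∑ _z ∈ A', 1 := by simp
      _ ≤ ∑ z ∈ A', c z := Finset.sum_le_sum hone
  have hbig : A'.card * (δ + 1) ≤ A'.card * A'.card + C.card := by
    rw [hsum]
    calc A'.card * (δ + 1) = ∑ _z ∈ A', (δ + 1) := by simp [Nat.mul_comm]
      _ ≤ ∑ z ∈ A', (A'.card + c z) := Finset.sum_le_sum hdegz
      _ = A'.card * A'.card + ∑ z ∈ A', c z := by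
          rw [Finset.sum_add_distrib]; simp [Nat.mul_comm]
  have hm1' : (1 : ℤ) ≤ (A'.card : ℤ) := by exact_mod_cast hm1
  have hmC' : (A'.card : ℤ) ≤ (C.card : ℤ) := by exact_mod_cast hmC
  have hC' : (C.card : ℤ) + 1 ≤ (δ : ℤ) := by exact_mod_cast hC
  have hbig' : (A'.card : ℤ) * (δ + 1) ≤ (A'.card : ℤ) * A'.card + C.card := by
    exact_mod_cast hbig
  nlinarith [mul_nonneg (by linarith : (0:ℤ) ≤ (A'.card : ℤ) - 1)
    (by linarith : (0:ℤ) ≤ (δ : ℤ) - (A'.card : ℤ))]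

lemma main_step [Fintype V] (G : SimpleGraph V) (hG : G.Connected)
    (hH1 : IsEmpty (H1 ↪g G)) (hP5 : IsEmpty (pathGraph 5 ↪g G))
    (F : Finset (Sym2 V)) (hlt : F.card < minDeg G) :
    (G.deleteEdges ↑F).Connected := by
  classical
  set δ := minDeg G with hδdef
  have hdeg : ∀ v : V, δ ≤ (G.neighborSet v).ncard := fun v => Nat.sInf_le ⟨v, rfl⟩
  have hdegF : ∀ v : V, δ ≤ (Finset.univ.filter (G.Adj v ·)).card := by
    intro v
    have hs : G.neighborSet v = ↑(Finset.univ.filter (G.Adj v ·)) := by ext q; simp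
    have h := hdeg v
    rwa [hs, Set.ncard_coe_finset] at h
  by_contra hncon
  set H := G.deleteEdges ↑F with hHdef
  have hneV : Nonempty V := hG.nonempty
  obtain ⟨u, w0, hnr⟩ : ∃ u w, ¬ H.Reachable u w := by
    by_contra hfor; push_neg at hfor
    exact hncon ((SimpleGraph.connected_iff H).mpr ⟨fun p q => hfor p q, hneV⟩)
  set A : Set V := {z | H.Reachable u z} with hAdef
  have huA : u ∈ A := Reachable.refl u
  have hw0A : w0 ∉ A := hnr
  have cross : ∀ p q, p ∈ A → q ∉ A → G.Adj p q → s(p, q) ∈ F := by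
    intro p q hp hq hadj
    by_contra hsF
    have hHadj : H.Adj p q := by
      rw [hHdef, SimpleGraph.deleteEdges_adj]
      exact ⟨hadj, by simpa using hsF⟩
    exact hq ((hp : H.Reachable u p).trans hHadj.reachable)
  have hcountA : {pq : V × V | pq.1 ∈ A ∧ pq.2 ∉ A ∧ G.Adj pq.1 pq.2}.ncard < δ := by
    have hle : {pq : V × V | pq.1 ∈ A ∧ pq.2 ∉ A ∧ G.Adj pq.1 pq.2}.ncard
        ≤ (↑F : Set (Sym2 V)).ncard := by
      apply Set.ncard_le_ncard_of_injOn (fun pq => s(pq.1, pq.2))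
      · rintro ⟨p, q⟩ ⟨hp, hq, hadj⟩
        exact cross p q hp hq hadj
      · rintro ⟨p, q⟩ ⟨hp, hq, -⟩ ⟨p', q'⟩ ⟨hp', hq', -⟩ heq
        have heq2 : s(p, q) = s(p', q') := heq
        rcases Sym2.eq_iff.mp heq2 with ⟨h1, h2⟩ | ⟨h1, h2⟩
        · subst h1; subst h2; rfl
        · exact absurd (h1 ▸ hp) hq'
    rw [Set.ncard_coe_finset] at hle
    omega
  have hcountB : {pq : V × V | pq.1 ∈ Aᶜ ∧ pq.2 ∉ Aᶜ ∧ G.Adj pq.1 pq.2}.ncard < δ := by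
    have hle : {pq : V × V | pq.1 ∈ Aᶜ ∧ pq.2 ∉ Aᶜ ∧ G.Adj pq.1 pq.2}.ncard
        ≤ (↑F : Set (Sym2 V)).ncard := by
      apply Set.ncard_le_ncard_of_injOn (fun pq => s(pq.1, pq.2))
      · rintro ⟨p, q⟩ ⟨hp, hq, hadj⟩
        show s(p, q) ∈ (↑F : Set (Sym2 V))
        rw [Sym2.eq_swap]
        exact cross q p (by simpa using hq) (by simpa using hp) hadj.symm
      · rintro ⟨p, q⟩ ⟨hp, hq, -⟩ ⟨p', q'⟩ ⟨hp', hq', -⟩ heq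
        have heq2 : s(p, q) = s(p', q') := heq
        rcases Sym2.eq_iff.mp heq2 with ⟨h1, h2⟩ | ⟨h1, h2⟩
        · subst h1; subst h2; rfl
        · exact absurd (h1 ▸ hp) hq'
    rw [Set.ncard_coe_finset] at hle
    omega
  obtain ⟨a, haA, ha_int⟩ := exists_interior G δ hdeg A ⟨u, huA⟩ hcountA
  obtain ⟨b, hbA', hb_int'⟩ := exists_interior G δ hdeg Aᶜ ⟨w0, hw0A⟩ hcountB
  have hbA : b ∉ A := hbA'
  have hb_int : ∀ q, G.Adj b q → q ∉ A := fun q h => hb_int' q h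
  have hab : a ≠ b := fun h => hbA (h ▸ haA)
  have hreach : G.Reachable a b := hG.preconnected a b
  obtain ⟨w, hwlen⟩ := hreach.exists_walk_length_eq_dist
  have hnab : ¬ G.Adj a b := fun h => hbA (ha_int b h)
  have hd0 : G.dist a b ≠ 0 := fun h => hab (hreach.dist_eq_zero_iff.mp h)
  have hd1 : G.dist a b ≠ 1 := by
    intro h
    have hl : w.length = 1 := by rw [hwlen, h]
    have hadj : G.Adj a b := by
      have h2 := w.adj_getVert_succ (i := 0) (by omega)
      rw [w.getVert_zero, show (0+1 : ℕ) = 1 from rfl,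
        w.getVert_of_length_le (i := 1) (by omega)] at h2
      exact h2
    exact hnab hadj
  have hd2 : G.dist a b ≠ 2 := by
    intro h
    have hl : w.length = 2 := by rw [hwlen, h]
    have h1 : G.Adj a (w.getVert 1) := by
      have h2 := w.adj_getVert_succ (i := 0) (by omega)
      rwa [w.getVert_zero] at h2
    have h2 : G.Adj (w.getVert 1) b := by
      have h3 := w.adj_getVert_succ (i := 1) (by omega)
      rwa [show (1+1 : ℕ) = 2 from rfl, w.getVert_of_length_le (i := 2) (by omega)] at h3
    exact (hb_int _ h2.symm) (ha_int _ h1)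
  have hd4 : G.dist a b < 4 := by
    by_contra hge
    push_neg at hge
    have hlen : 4 ≤ w.length := by omega
    have hne2 : ∀ i j : ℕ, i < j → j ≤ w.length → w.getVert i ≠ w.getVert j := by
      intro i j hij hjl heq
      have t1 := dist_getVert_le hG w i
      have t2 := dist_getVert_le' hG w j hjl
      rw [← heq] at t2
      have t3 : G.dist a b ≤ G.dist a (w.getVert i) + G.dist (w.getVert i) b :=
        hG.dist_triangle
      rw [hwlen] at t2 hjl
      omega
    have hnadj : ∀ i j : ℕ, i + 2 ≤ j → j ≤ w.length →
        ¬ G.Adj (w.getVert i) (w.getVert j) := by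
      intro i j hij hjl hadj
      have t1 := dist_getVert_le hG w i
      have t2 := dist_getVert_le' hG w j hjl
      have t4 : G.dist (w.getVert i) (w.getVert j) ≤ 1 := by
        have := G.dist_le (Walk.cons hadj Walk.nil)
        simpa using this
      have t3 : G.dist a b ≤ G.dist a (w.getVert i) + G.dist (w.getVert i) b :=
        hG.dist_triangle
      have t5 : G.dist (w.getVert i) b
          ≤ G.dist (w.getVert i) (w.getVert j) + G.dist (w.getVert j) b := hG.dist_triangle
      rw [hwlen] at t2 hjl
      omega
    obtain ⟨e⟩ := embed_P5 G (w.getVert 0) (w.getVert 1) (w.getVert 2) (w.getVert 3)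
      (w.getVert 4)
      (w.adj_getVert_succ (by omega)) (w.adj_getVert_succ (by omega))
      (w.adj_getVert_succ (by omega)) (w.adj_getVert_succ (by omega))
      (hnadj 0 2 (by omega) (by omega)) (hnadj 0 3 (by omega) (by omega))
      (hnadj 0 4 (by omega) (by omega)) (hnadj 1 3 (by omega) (by omega))
      (hnadj 1 4 (by omega) (by omega)) (hnadj 2 4 (by omega) (by omega))
      (hne2 0 2 (by omega) (by omega)) (hne2 0 3 (by omega) (by omega))
      (hne2 0 4 (by omega) (by omega)) (hne2 1 3 (by omega) (by omega))
      (hne2 1 4 (by omega) (by omega)) (hne2 2 4 (by omega) (by omega))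
    exact hP5.false e
  have hd3 : G.dist a b = 3 := by omega
  have hwl : w.length = 3 := by rw [hwlen, hd3]
  set x := w.getVert 1 with hxdef
  set y := w.getVert 2 with hydef
  have hax : G.Adj a x := by
    have h2 := w.adj_getVert_succ (i := 0) (by omega)
    rwa [w.getVert_zero] at h2
  have hxy : G.Adj x y := w.adj_getVert_succ (by omega)
  have hyb : G.Adj y b := by
    have h2 := w.adj_getVert_succ (i := 2) (by omega)
    rwa [show (2+1 : ℕ) = 3 from rfl, w.getVert_of_length_le (i := 3) (by omega)] at h2
  have hxA : x ∈ A := ha_int _ hax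
  have hyA : y ∉ A := hb_int _ hyb.symm
  have hnay : ¬ G.Adj a y := fun h => hyA (ha_int _ h)
  have hnxb : ¬ G.Adj x b := fun h => (hb_int _ h.symm) hxA
  have haya : a ≠ y := fun h => hyA (h ▸ haA)
  have hxb : x ≠ b := fun h => hbA (h ▸ hxA)
  set S' : Finset V := Finset.univ.filter
    (fun z => G.Adj a z ∧ G.Adj x z ∧ ¬ G.Adj y z) with hS'def
  set T' : Finset V := Finset.univ.filter
    (fun z => G.Adj b z ∧ G.Adj y z ∧ ¬ G.Adj x z) with hT'def
  set P : Finset V := Finset.univ.filter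
    (fun z => z ≠ x ∧ G.Adj a z ∧ G.Adj y z) with hPdef
  set Q : Finset V := Finset.univ.filter
    (fun z => z ≠ y ∧ G.Adj b z ∧ G.Adj x z) with hQdef
  have hNa_sub : (Finset.univ.filter (G.Adj a ·)).erase x ⊆ S' ∪ P := by
    intro z hz
    obtain ⟨hzx, hzNa⟩ := Finset.mem_erase.mp hz
    have haz : G.Adj a z := by simpa using hzNa
    have hzA : z ∈ A := ha_int _ haz
    by_cases hyz : G.Adj y z
    · exact Finset.mem_union_right _ (by simp [hPdef, hzx, haz, hyz])
    · have hxz : G.Adj x z := by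
        by_contra hxz
        obtain ⟨e⟩ := embed_P5 G z a x y b haz.symm hax hxy hyb
          (fun h => hxz h.symm) (fun h => hyz h.symm) (fun h => (hb_int _ h.symm) hzA)
          hnay hnab hnxb hzx (fun h => hyA (h ▸ hzA)) (fun h => hbA (h ▸ hzA))
          haya hab hxb
        exact hP5.false e
      exact Finset.mem_union_left _ (by simp [hS'def, haz, hxz, hyz])
  have hNb_sub : (Finset.univ.filter (G.Adj b ·)).erase y ⊆ T' ∪ Q := by
    intro z hz
    obtain ⟨hzy, hzNb⟩ := Finset.mem_erase.mp hz
    have hbz : G.Adj b z := by simpa using hzNb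
    have hzA : z ∉ A := hb_int _ hbz
    by_cases hxz : G.Adj x z
    · exact Finset.mem_union_right _ (by simp [hQdef, hzy, hbz, hxz])
    · have hyz : G.Adj y z := by
        by_contra hyz
        obtain ⟨e⟩ := embed_P5 G z b y x a hbz.symm hyb.symm hxy.symm hax.symm
          (fun h => hyz h.symm) (fun h => hxz h.symm) (fun h => hzA (ha_int _ h.symm))
          (fun h => hnxb h.symm) (fun h => hnab h.symm) (fun h => hnay h.symm)
          hzy (fun h => hzA (h.symm ▸ hxA)) (fun h => hzA (h.symm ▸ haA))
          (Ne.symm hxb) hab.symm haya.symm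
        exact hP5.false e
      exact Finset.mem_union_left _ (by simp [hT'def, hbz, hyz, hxz])
  have hcard_a : δ ≤ S'.card + P.card + 1 := by
    have h1 := hdegF a
    have hx_mem : x ∈ Finset.univ.filter (G.Adj a ·) := by simp [hax]
    have h2 := Finset.card_le_card hNa_sub
    rw [Finset.card_erase_of_mem hx_mem] at h2
    have h3 := Finset.card_union_le S' P
    have h4 : 1 ≤ (Finset.univ.filter (G.Adj a ·)).card := Finset.card_pos.mpr ⟨x, hx_mem⟩
    omega
  have hcard_b : δ ≤ T'.card + Q.card + 1 := by
    have h1 := hdegF b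
    have hy_mem : y ∈ Finset.univ.filter (G.Adj b ·) := by simp [hyb.symm]
    have h2 := Finset.card_le_card hNb_sub
    rw [Finset.card_erase_of_mem hy_mem] at h2
    have h3 := Finset.card_union_le T' Q
    have h4 : 1 ≤ (Finset.univ.filter (G.Adj b ·)).card := Finset.card_pos.mpr ⟨y, hy_mem⟩
    omega
  have hSmem : ∀ z ∈ S', G.Adj a z ∧ G.Adj x z ∧ ¬G.Adj y z := fun z hz => by
    simpa [hS'def] using hz
  have hTmem : ∀ z ∈ T', G.Adj b z ∧ G.Adj y z ∧ ¬G.Adj x z := fun z hz => by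
    simpa [hT'def] using hz
  have hPmem : ∀ p ∈ P, p ≠ x ∧ G.Adj a p ∧ G.Adj y p := fun p hp => by
    simpa [hPdef] using hp
  have hQmem : ∀ q ∈ Q, q ≠ y ∧ G.Adj b q ∧ G.Adj x q := fun q hq => by
    simpa [hQdef] using hq
  have hPA : ∀ p ∈ P, p ∈ A := fun p hp => ha_int _ (hPmem p hp).2.1
  have hQA : ∀ q ∈ Q, q ∉ A := fun q hq => hb_int _ (hQmem q hq).2.1
  have hSA : ∀ z ∈ S', z ∈ A := fun z hz => ha_int _ (hSmem z hz).1
  have hTA : ∀ z ∈ T', z ∉ A := fun z hz => hb_int _ (hTmem z hz).1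
  by_cases hstex : ∃ a1 ∈ S', ∃ b1 ∈ T', ¬ G.Adj a1 b1
  · obtain ⟨a1, ha1m, b1, hb1m, hnadj1⟩ := hstex
    obtain ⟨haa1, hxa1, hnya1⟩ := hSmem a1 ha1m
    obtain ⟨hbb1, hyb1, hnxb1⟩ := hTmem b1 hb1m
    have ha1A : a1 ∈ A := ha_int _ haa1
    have hb1A : b1 ∉ A := hb_int _ hbb1
    obtain ⟨e⟩ := embed_H1 G a a1 x y b1 b
      haa1 hxa1.symm hxy hyb1 hbb1.symm hax hyb
      hnay (fun h => hb1A (ha_int _ h)) hnab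
      (fun h => hnya1 h.symm) hnadj1 (fun h => (hb_int _ h.symm) ha1A)
      hnxb1 hnxb
      haya (fun h => hb1A (h ▸ haA)) hab
      (fun h => hyA (h ▸ ha1A)) (fun h => hb1A (h ▸ ha1A)) (fun h => hbA (h ▸ ha1A))
      (fun h => hb1A (h ▸ hxA)) hxb
    exact hH1.false e
  · push_neg at hstex
    set E1 : Finset (Sym2 V) := P.image (fun p => s(p, y)) with hE1def
    set E2 : Finset (Sym2 V) := Q.image (fun q => s(x, q)) with hE2def
    set E3 : Finset (Sym2 V) := {s(x, y)} with hE3def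
    set E4 : Finset (Sym2 V) := (S' ×ˢ T').image (fun zz => s(zz.1, zz.2)) with hE4def
    have hsubF : E1 ∪ E2 ∪ E3 ∪ E4 ⊆ F := by
      intro e he
      simp only [Finset.mem_union] at he
      rcases he with ((he | he) | he) | he
      · obtain ⟨p, hp, rfl⟩ := Finset.mem_image.mp he
        exact cross p y (hPA p hp) hyA (hPmem p hp).2.2.symm
      · obtain ⟨q, hq, rfl⟩ := Finset.mem_image.mp he
        exact cross x q hxA (hQA q hq) (hQmem q hq).2.2
      · rw [Finset.mem_singleton.mp he]; exact cross x y hxA hyA hxy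
      · obtain ⟨⟨z, t⟩, hzt, rfl⟩ := Finset.mem_image.mp he
        obtain ⟨hz, ht⟩ := Finset.mem_product.mp hzt
        exact cross z t (hSA z hz) (hTA t ht) (hstex z hz t ht)
    have hc1 : E1.card = P.card := by
      rw [hE1def]
      apply Finset.card_image_of_injOn
      intro p hp p' hp' heq
      rcases Sym2.eq_iff.mp heq with ⟨h1, -⟩ | ⟨h1, h2⟩
      · exact h1
      · exact absurd (h1 ▸ hPA p hp) hyA
    have hc2 : E2.card = Q.card := by
      rw [hE2def]
      apply Finset.card_image_of_injOn
      intro q hq q' hq' heq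
      rcases Sym2.eq_iff.mp heq with ⟨-, h2⟩ | ⟨h1, h2⟩
      · exact h2
      · exact absurd (h1 ▸ hxA) (hQA q' hq')
    have hc4 : E4.card = S'.card * T'.card := by
      rw [hE4def, Finset.card_image_of_injOn, Finset.card_product]
      rintro ⟨z, t⟩ hm ⟨z', t'⟩ hm' heq
      obtain ⟨hz, ht⟩ : z ∈ S' ∧ t ∈ T' := by simpa using hm
      obtain ⟨hz', ht'⟩ : z' ∈ S' ∧ t' ∈ T' := by simpa using hm'
      have heq2 : s(z, t) = s(z', t') := heq
      rcases Sym2.eq_iff.mp heq2 with ⟨h1, h2⟩ | ⟨h1, h2⟩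
      · simp only [Prod.mk.injEq]; exact ⟨h1, h2⟩
      · exact absurd (h1 ▸ hSA z hz) (hTA t' ht')
    have hdis12 : Disjoint E1 E2 := by
      rw [Finset.disjoint_left]
      intro e he1 he2
      obtain ⟨p, hp, rfl⟩ := Finset.mem_image.mp he1
      obtain ⟨q, hq, heq⟩ := Finset.mem_image.mp he2
      rcases Sym2.eq_iff.mp heq with ⟨h1, h2⟩ | ⟨h1, h2⟩
      · exact (hQmem q hq).1 h2
      · exact hyA (h1 ▸ hxA)
    have hdis13 : Disjoint E1 E3 := by
      rw [Finset.disjoint_left]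
      intro e he1 he3
      obtain ⟨p, hp, rfl⟩ := Finset.mem_image.mp he1
      have heq : s(p, y) = s(x, y) := Finset.mem_singleton.mp he3
      rcases Sym2.eq_iff.mp heq with ⟨h1, -⟩ | ⟨h1, h2⟩
      · exact (hPmem p hp).1 h1
      · exact hyA (h1 ▸ hPA p hp)
    have hdis23 : Disjoint E2 E3 := by
      rw [Finset.disjoint_left]
      intro e he2 he3
      obtain ⟨q, hq, rfl⟩ := Finset.mem_image.mp he2
      have heq : s(x, q) = s(x, y) := Finset.mem_singleton.mp he3
      rcases Sym2.eq_iff.mp heq with ⟨-, h2⟩ | ⟨h1, h2⟩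
      · exact (hQmem q hq).1 h2
      · exact hyA (h1.symm ▸ hxA)
    have hdis14 : Disjoint E1 E4 := by
      rw [Finset.disjoint_left]
      intro e he1 he4
      obtain ⟨p, hp, rfl⟩ := Finset.mem_image.mp he1
      obtain ⟨⟨z, t⟩, hzt, heq⟩ := Finset.mem_image.mp he4
      obtain ⟨hz, ht⟩ := Finset.mem_product.mp hzt
      have heq2 : s(z, t) = s(p, y) := heq
      rcases Sym2.eq_iff.mp heq2 with ⟨h1, h2⟩ | ⟨h1, h2⟩
      · exact G.irrefl (h2 ▸ (hTmem t ht).2.1)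
      · exact hyA (h1 ▸ hSA z hz)
    have hdis24 : Disjoint E2 E4 := by
      rw [Finset.disjoint_left]
      intro e he2 he4
      obtain ⟨q, hq, rfl⟩ := Finset.mem_image.mp he2
      obtain ⟨⟨z, t⟩, hzt, heq⟩ := Finset.mem_image.mp he4
      obtain ⟨hz, ht⟩ := Finset.mem_product.mp hzt
      have heq2 : s(z, t) = s(x, q) := heq
      rcases Sym2.eq_iff.mp heq2 with ⟨h1, h2⟩ | ⟨h1, h2⟩
      · exact (hSmem z hz).2.2 (h1.symm ▸ hxy.symm)
      · exact (hTA t ht) (h2.symm ▸ hxA)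
    have hdis34 : Disjoint E3 E4 := by
      rw [Finset.disjoint_left]
      intro e he3 he4
      obtain ⟨⟨z, t⟩, hzt, heq⟩ := Finset.mem_image.mp he4
      obtain ⟨hz, ht⟩ := Finset.mem_product.mp hzt
      have heq2 : s(z, t) = s(x, y) := by
        rw [heq]; exact Finset.mem_singleton.mp he3
      rcases Sym2.eq_iff.mp heq2 with ⟨h1, h2⟩ | ⟨h1, h2⟩
      · exact (hSmem z hz).2.2 (h1.symm ▸ hxy.symm)
      · exact (hTA t ht) (h2.symm ▸ hxA)
    have h123 : Disjoint (E1 ∪ E2) E3 := Finset.disjoint_union_left.mpr ⟨hdis13, hdis23⟩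
    have h1234 : Disjoint (E1 ∪ E2 ∪ E3) E4 :=
      Finset.disjoint_union_left.mpr
        ⟨Finset.disjoint_union_left.mpr ⟨hdis14, hdis24⟩, hdis34⟩
    have hcardU : (E1 ∪ E2 ∪ E3 ∪ E4).card = P.card + Q.card + 1 + S'.card * T'.card := by
      rw [Finset.card_union_of_disjoint h1234, Finset.card_union_of_disjoint h123,
        Finset.card_union_of_disjoint hdis12, hc1, hc2, hc4, hE3def,
        Finset.card_singleton]
    have htot : P.card + Q.card + 1 + S'.card * T'.card ≤ F.card := by
      rw [← hcardU]
      exact Finset.card_le_card hsubF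
    rcases Nat.eq_zero_or_pos T'.card with ht0 | htpos
    · rw [ht0, Nat.mul_zero] at htot
      rw [ht0] at hcard_b
      omega
    · have hsle : S'.card ≤ S'.card * T'.card := Nat.le_mul_of_pos_right _ htpos
      set k := S'.card * T'.card
      omega

end Helpers

/-- Every connected `{H₁, P₅}`-free graph on at least 2 vertices has edge-connectivity
equal to its minimum degree. -/
theorem h1_p5_free_edgeConn_eq_minDeg {V : Type*} [Fintype V] (G : SimpleGraph V)
    (hG : G.Connected) (hcard : 2 ≤ Fintype.card V)
    (hH1 : IsEmpty (H1 ↪g G)) (hP5 : IsEmpty (pathGraph 5 ↪g G)) :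
    edgeConn G = minDeg G := by
  classical
  have hneV : Nonempty V := Fintype.card_pos_iff.mp (by omega)
  obtain ⟨v0⟩ := hneV
  have hmemD : minDeg G ∈ {d | ∃ v : V, d = (G.neighborSet v).ncard} :=
    Nat.sInf_mem ⟨_, v0, rfl⟩
  obtain ⟨v, hv⟩ := hmemD
  have hfin : (G.incidenceSet v).Finite := Set.toFinite _
  set Fv : Finset (Sym2 V) := hfin.toFinset with hFvdef
  have hFvcoe : ↑Fv = G.incidenceSet v := hfin.coe_toFinset
  have hFvsub : ↑Fv ⊆ G.edgeSet := hFvcoe ▸ G.incidenceSet_subset v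
  have hFvcard : Fv.card = minDeg G := by
    rw [hv]
    have h1 : Fv.card = (G.incidenceSet v).ncard := (Set.ncard_eq_toFinset_card _ hfin).symm
    rw [h1, ← Nat.card_coe_set_eq, ← Nat.card_coe_set_eq]
    exact Nat.card_congr (G.incidenceSetEquivNeighborSet v)
  have hdel : ¬ (G.deleteEdges ↑Fv).Connected := by
    intro hcon
    obtain ⟨w2, hw2⟩ := Fintype.exists_ne_of_one_lt_card (by omega) v
    obtain ⟨p⟩ := hcon.preconnected v w2
    cases p with
    | nil => exact hw2 rfl
    | cons h q =>
        rw [SimpleGraph.deleteEdges_adj, hFvcoe] at h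
        exact h.2 ((G.mk'_mem_incidenceSet_left_iff).mpr h.1)
  have hmemS : minDeg G ∈ {k | ∃ F : Finset (Sym2 V),
      ↑F ⊆ G.edgeSet ∧ F.card = k ∧ ¬ (G.deleteEdges ↑F).Connected} :=
    ⟨Fv, hFvsub, hFvcard, hdel⟩
  have h1 : edgeConn G ≤ minDeg G := Nat.sInf_le hmemS
  have h2 : minDeg G ≤ edgeConn G := by
    by_contra hc
    push_neg at hc
    have hmem := Nat.sInf_mem (⟨minDeg G, hmemS⟩ : Set.Nonempty _)
    obtain ⟨F, hFsub, hFcard, hFncon⟩ := hmem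
    have hltF : F.card < minDeg G := by
      rw [hFcard]; exact hc
    exact hFncon (main_step G hG hH1 hP5 F hltF)
  exact le_antisymm h1 h2
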